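/- Let u = p/q with p, q positive coprime integers such that p* + q* is odd. Then for every n ≥ 1, the map from ({0,1}^n) × ({0,1}^n) to ℝ sending (ε, ε') to ∑_{k=0}^{n−1} (ε_k + u·ε'_k)·4^k is injective; that is, no set V_n has a multiple point. -/

import Mathlib

/-- `n* `: the first nonzero digit from the right of `n` in base `b`,
i.e. `(n / b^{j*}) % b` where `j*` is the largest `j` with `b^j ∣ n`. -/
def fstDigit (b n : ℕ) : ℕ := n / b ^ padicValNat b n % b

/-- The parametrization of `V_n`: `(ε, ε') ↦ ∑_{k=0}^{n−1} (ε_k + u·ε'_k)·4^k`. -/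
def VnMap (u : ℝ) (n : ℕ) (p : (Fin n → Bool) × (Fin n → Bool)) : ℝ :=
  ∑ k : Fin n, ((if p.1 k then (1 : ℝ) else 0) + u * (if p.2 k then (1 : ℝ) else 0))
    * 4 ^ (k : ℕ)


private lemma sum_shift (δ : ℕ → ℤ) (n : ℕ) :
    ∑ k ∈ Finset.range (n + 1), δ k * 4 ^ k
      = δ 0 + 4 * ∑ k ∈ Finset.range n, δ (k + 1) * 4 ^ k := by
  rw [Finset.sum_range_succ' (fun k => δ k * 4 ^ k) n, Finset.mul_sum]
  simp only [pow_zero, mul_one, pow_succ]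
  rw [add_comm]
  congr 1
  exact Finset.sum_congr rfl (fun k _ => by ring)

private lemma digits_zero (n : ℕ) : ∀ (δ : ℕ → ℤ),
    (∀ k, δ k = -1 ∨ δ k = 0 ∨ δ k = 1) →
    (∑ k ∈ Finset.range n, δ k * 4 ^ k) = 0 → ∀ k < n, δ k = 0 := by
  induction n with
  | zero => intro δ _ _ k hk; omega
  | succ n ih =>
    intro δ hδ h k hk
    rw [sum_shift] at h
    have h0 : δ 0 = 0 := by have := hδ 0; omega
    have hT : (∑ k ∈ Finset.range n, δ (k + 1) * 4 ^ k) = 0 := by omega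
    rcases k with _ | j
    · exact h0
    · exact ih (fun k => δ (k + 1)) (fun k => hδ (k + 1)) hT j (by omega)

private lemma even_v2 (n : ℕ) : ∀ (δ : ℕ → ℤ),
    (∀ k, δ k = -1 ∨ δ k = 0 ∨ δ k = 1) →
    (∑ k ∈ Finset.range n, δ k * 4 ^ k) ≠ 0 →
    Even (padicValNat 2 (∑ k ∈ Finset.range n, δ k * 4 ^ k).natAbs) := by
  induction n with
  | zero => simp
  | succ n ih =>
    intro δ hδ hne
    rw [sum_shift] at hne ⊢
    set T := ∑ k ∈ Finset.range n, δ (k + 1) * 4 ^ k with hT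
    by_cases h0 : δ 0 = 0
    · rw [h0, zero_add] at hne ⊢
      have hTne : T ≠ 0 := by intro h; rw [h, mul_zero] at hne; exact hne rfl
      have h4 : ((4 : ℤ) * T).natAbs = 4 * T.natAbs := by
        rw [Int.natAbs_mul]; rfl
      rw [h4, padicValNat.mul (by norm_num) (Int.natAbs_ne_zero.mpr hTne)]
      have h42 : padicValNat 2 4 = 2 := by
        have h : (4 : ℕ) = 2 ^ 2 := rfl
        rw [h, padicValNat.prime_pow]
      rw [h42]
      have := ih (fun k => δ (k + 1)) (fun k => hδ (k + 1)) hTne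
      obtain ⟨c, hc⟩ := this
      rw [← hT] at hc
      exact ⟨c + 1, by omega⟩
    · have hodd : Odd (δ 0 + 4 * T) := by
        rcases hδ 0 with h | h | h
        · exact ⟨2 * T - 1, by rw [h]; ring⟩
        · exact absurd h h0
        · exact ⟨2 * T, by rw [h]; ring⟩
      have hodd' : Odd (δ 0 + 4 * T).natAbs := Int.natAbs_odd.mpr hodd
      have hnd : ¬ (2 ∣ (δ 0 + 4 * T).natAbs) := by
        rw [Nat.odd_iff] at hodd'; omega
      rw [padicValNat.eq_zero_of_not_dvd hnd]
      exact Even.zero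

private lemma fst_parity (n : ℕ) (hn : 0 < n) :
    Odd (fstDigit 4 n + padicValNat 2 n) := by
  set e := padicValNat 2 n with he
  have hd : (2 : ℕ) ^ e ∣ n := pow_padicValNat_dvd
  have hnd : ¬ (2 : ℕ) ^ (e + 1) ∣ n := pow_succ_padicValNat_not_dvd hn.ne'
  set m := n / 2 ^ e with hm
  have hmn : 2 ^ e * m = n := Nat.mul_div_cancel' hd
  have h4k : ∀ k, (4 : ℕ) ^ k = 2 ^ (2 * k) := fun k => by
    rw [show (4 : ℕ) = 2 ^ 2 from rfl, ← pow_mul]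
  have hmodd : m % 2 = 1 := by
    rcases Nat.mod_two_eq_zero_or_one m with h | h
    · obtain ⟨t, ht⟩ := Nat.dvd_of_mod_eq_zero h
      exact absurd ⟨t, by rw [← hmn, ht]; ring⟩ hnd
    · exact h
  have hv4 : padicValNat 4 n = e / 2 := by
    rw [padicValNat_def' (by norm_num) hn.ne']
    apply multiplicity_eq_of_dvd_of_not_dvd
    · rw [h4k]
      exact dvd_trans (pow_dvd_pow 2 (by omega)) hd
    · intro hdvd
      rw [h4k] at hdvd
      exact hnd (dvd_trans (pow_dvd_pow 2 (by omega)) hdvd)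
  have hneq : n = 2 ^ (2 * (e / 2)) * (2 ^ (e % 2) * m) := by
    rw [← hmn, ← mul_assoc, ← pow_add]
    congr 2
    omega
  have hfd : fstDigit 4 n = (2 ^ (e % 2) * m) % 4 := by
    rw [fstDigit, hv4, h4k, hneq,
      Nat.mul_div_cancel_left _ (pow_pos (by norm_num) _)]
  rw [Nat.odd_iff]
  rcases Nat.mod_two_eq_zero_or_one e with h | h
  · rw [h, pow_zero, one_mul] at hfd
    omega
  · rw [h, pow_one] at hfd
    omega

/-- If `u = p/q` with `p, q` positive coprime and `p* + q*` odd, then for every `n ≥ 1`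
the parametrization of `V_n` is injective: no `V_n` has a multiple point. -/
theorem VnMap_injective_of_odd_sum (p q : ℕ) (hp : 0 < p) (hq : 0 < q)
    (hpq : Nat.Coprime p q) (hodd : Odd (fstDigit 4 p + fstDigit 4 q)) :
    ∀ n : ℕ, 1 ≤ n → Function.Injective (VnMap ((p : ℝ) / q) n) := by
  intro n hn a b hVeq
  set u : ℝ := (p : ℝ) / q with hu
  have hq0 : (q : ℝ) ≠ 0 := Nat.cast_ne_zero.mpr hq.ne'
  have hqu : (q : ℝ) * u = p := by rw [hu]; field_simp
  set a1 : ℕ → Bool := fun k => if h : k < n then a.1 ⟨k, h⟩ else false with ha1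
  set a2 : ℕ → Bool := fun k => if h : k < n then a.2 ⟨k, h⟩ else false with ha2
  set b1 : ℕ → Bool := fun k => if h : k < n then b.1 ⟨k, h⟩ else false with hb1
  set b2 : ℕ → Bool := fun k => if h : k < n then b.2 ⟨k, h⟩ else false with hb2
  have hVa : VnMap u n a = ∑ k ∈ Finset.range n,
      ((if a1 k then (1 : ℝ) else 0) + u * (if a2 k then (1 : ℝ) else 0)) * 4 ^ k := by
    rw [VnMap, ← Fin.sum_univ_eq_sum_range
      (fun k => ((if a1 k then (1 : ℝ) else 0) + u * (if a2 k then (1 : ℝ) else 0)) * 4 ^ k)]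
    refine Finset.sum_congr rfl fun k _ => ?_
    simp [ha1, ha2, k.isLt]
  have hVb : VnMap u n b = ∑ k ∈ Finset.range n,
      ((if b1 k then (1 : ℝ) else 0) + u * (if b2 k then (1 : ℝ) else 0)) * 4 ^ k := by
    rw [VnMap, ← Fin.sum_univ_eq_sum_range
      (fun k => ((if b1 k then (1 : ℝ) else 0) + u * (if b2 k then (1 : ℝ) else 0)) * 4 ^ k)]
    refine Finset.sum_congr rfl fun k _ => ?_
    simp [hb1, hb2, k.isLt]
  set δ1 : ℕ → ℤ := fun k => (if a1 k then (1 : ℤ) else 0) - (if b1 k then 1 else 0) with hδ1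
  set δ2 : ℕ → ℤ := fun k => (if a2 k then (1 : ℤ) else 0) - (if b2 k then 1 else 0) with hδ2
  have hδ1v : ∀ k, δ1 k = -1 ∨ δ1 k = 0 ∨ δ1 k = 1 := fun k => by
    simp only [hδ1]; cases a1 k <;> cases b1 k <;> simp
  have hδ2v : ∀ k, δ2 k = -1 ∨ δ2 k = 0 ∨ δ2 k = 1 := fun k => by
    simp only [hδ2]; cases a2 k <;> cases b2 k <;> simp
  have keyR : ((∑ k ∈ Finset.range n, ((q : ℤ) * δ1 k + (p : ℤ) * δ2 k) * 4 ^ k : ℤ) : ℝ) = 0 := by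
    push_cast
    have hterm : ∀ k ∈ Finset.range n,
        ((q : ℝ) * (δ1 k : ℝ) + (p : ℝ) * (δ2 k : ℝ)) * 4 ^ k
        = (q : ℝ) * ((((if a1 k then (1 : ℝ) else 0) + u * (if a2 k then (1 : ℝ) else 0)) * 4 ^ k)
          - (((if b1 k then (1 : ℝ) else 0) + u * (if b2 k then (1 : ℝ) else 0)) * 4 ^ k)) := by
      intro k _
      have e1 : ((δ1 k : ℤ) : ℝ) = (if a1 k then (1 : ℝ) else 0) - (if b1 k then 1 else 0) := by
        cases h : a1 k <;> cases h' : b1 k <;> simp [hδ1, h, h']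
      have e2 : ((δ2 k : ℤ) : ℝ) = (if a2 k then (1 : ℝ) else 0) - (if b2 k then 1 else 0) := by
        cases h : a2 k <;> cases h' : b2 k <;> simp [hδ2, h, h']
      rw [e1, e2, ← hqu]
      ring
    rw [Finset.sum_congr rfl hterm, ← Finset.mul_sum, Finset.sum_sub_distrib,
      ← hVa, ← hVb, hVeq, sub_self, mul_zero]
  have keyZ : (∑ k ∈ Finset.range n, ((q : ℤ) * δ1 k + (p : ℤ) * δ2 k) * 4 ^ k : ℤ) = 0 := by
    exact_mod_cast keyR
  set A : ℤ := ∑ k ∈ Finset.range n, δ1 k * 4 ^ k with hA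
  set B : ℤ := ∑ k ∈ Finset.range n, δ2 k * 4 ^ k with hB
  have hAB : (q : ℤ) * A + (p : ℤ) * B = 0 := by
    rw [hA, hB, Finset.mul_sum, Finset.mul_sum, ← Finset.sum_add_distrib, ← keyZ]
    exact Finset.sum_congr rfl fun k _ => by ring
  by_cases hA0 : A = 0
  · have hB0 : B = 0 := by
      have hpB : (p : ℤ) * B = 0 := by rw [hA0, mul_zero, zero_add] at hAB; exact hAB
      have hp' : (p : ℤ) ≠ 0 := by exact_mod_cast hp.ne'
      exact (mul_eq_zero.mp hpB).resolve_left hp'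
    have h1 := digits_zero n δ1 hδ1v (hA ▸ hA0)
    have h2 := digits_zero n δ2 hδ2v (hB ▸ hB0)
    have e1 : a.1 = b.1 := by
      funext k
      have hk := h1 k k.isLt
      have : a1 (k : ℕ) = b1 (k : ℕ) := by
        cases h : a1 (k : ℕ) <;> cases h' : b1 (k : ℕ) <;> simp [hδ1, h, h'] at hk ⊢
      simpa [ha1, hb1, k.isLt] using this
    have e2 : a.2 = b.2 := by
      funext k
      have hk := h2 k k.isLt
      have : a2 (k : ℕ) = b2 (k : ℕ) := by
        cases h : a2 (k : ℕ) <;> cases h' : b2 (k : ℕ) <;> simp [hδ2, h, h'] at hk ⊢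
      simpa [ha2, hb2, k.isLt] using this
    exact Prod.ext e1 e2
  · exfalso
    have hB0 : B ≠ 0 := by
      intro h
      apply hA0
      rw [h, mul_zero, add_zero] at hAB
      have hq' : (q : ℤ) ≠ 0 := by exact_mod_cast hq.ne'
      exact (mul_eq_zero.mp hAB).resolve_left hq'
    have heq : ((q : ℤ) * A).natAbs = ((p : ℤ) * B).natAbs := by
      have hneg : (q : ℤ) * A = -((p : ℤ) * B) := by linarith [hAB]
      rw [hneg, Int.natAbs_neg]
    rw [Int.natAbs_mul, Int.natAbs_mul, Int.natAbs_natCast, Int.natAbs_natCast] at heq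
    have hv : padicValNat 2 (q * A.natAbs) = padicValNat 2 (p * B.natAbs) := by rw [heq]
    rw [padicValNat.mul hq.ne' (Int.natAbs_ne_zero.mpr hA0),
      padicValNat.mul hp.ne' (Int.natAbs_ne_zero.mpr hB0)] at hv
    have hEA := even_v2 n δ1 hδ1v (hA ▸ hA0)
    have hEB := even_v2 n δ2 hδ2v (hB ▸ hB0)
    rw [← hA] at hEA
    rw [← hB] at hEB
    have hop := fst_parity p hp
    have hoq := fst_parity q hq
    rw [Nat.odd_iff] at hodd hop hoq
    rw [Nat.even_iff] at hEA hEB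
    omega
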